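/- Let z = (z₁, z₂, z₃) ∈ ℂ³ be such that the symmetric 2×2 complex matrix [[z₁, z₃],[z₃, z₂]] is unitary. Then |z₁z₂ − z₃²| = 1, z₁ = conj(z₂)·(z₁z₂ − z₃²), z₂ = conj(z₁)·(z₁z₂ − z₃²), and |z₂| ≤ 1. In particular, φ(z) = (z₁, z₂, z₁z₂ − z₃²) ∈ S_𝔼. -/

import Mathlib

/-- The Shilov boundary `S_𝔼` of the tetrablock. -/
def shilovTetrablock : Set (ℂ × ℂ × ℂ) :=
  {z | z.1 = (starRingEnd ℂ) z.2.1 * z.2.2 ∧ ‖z.2.2‖ = 1 ∧ ‖z.2.1‖ ≤ 1}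

theorem phi_maps_shilov_to_shilov (z₁ z₂ z₃ : ℂ)
    (hz : !![z₁, z₃; z₃, z₂] ∈ Matrix.unitaryGroup (Fin 2) ℂ) :
    ‖z₁ * z₂ - z₃ ^ 2‖ = 1 ∧
      z₁ = (starRingEnd ℂ) z₂ * (z₁ * z₂ - z₃ ^ 2) ∧
      z₂ = (starRingEnd ℂ) z₁ * (z₁ * z₂ - z₃ ^ 2) ∧
      ‖z₂‖ ≤ 1 ∧
      (z₁, z₂, z₁ * z₂ - z₃ ^ 2) ∈ shilovTetrablock := by
  have h := hz.2
  have e1 := congrFun (congrFun h 0) 0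
  have e2 := congrFun (congrFun h 0) 1
  have e3 := congrFun (congrFun h 1) 0
  have e4 := congrFun (congrFun h 1) 1
  simp [Matrix.mul_apply, Fin.sum_univ_two, Matrix.one_apply] at e1 e2 e3 e4
  have key : (z₁ * z₂ - z₃ ^ 2) *
      ((starRingEnd ℂ) z₁ * (starRingEnd ℂ) z₂ - (starRingEnd ℂ) z₃ ^ 2) = 1 := by
    linear_combination (z₃ * (starRingEnd ℂ) z₃ + z₂ * (starRingEnd ℂ) z₂) * e1 + e4
      - (z₁ * (starRingEnd ℂ) z₃ + z₃ * (starRingEnd ℂ) z₂) * e3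
  have hconj : (starRingEnd ℂ) (z₁ * z₂ - z₃ ^ 2)
      = (starRingEnd ℂ) z₁ * (starRingEnd ℂ) z₂ - (starRingEnd ℂ) z₃ ^ 2 := by
    simp [map_sub, map_mul, map_pow]
  have habs : ‖z₁ * z₂ - z₃ ^ 2‖ = 1 := by
    have h2 : ‖z₁ * z₂ - z₃ ^ 2‖ * ‖z₁ * z₂ - z₃ ^ 2‖ = 1 := by
      have := congrArg norm key
      rwa [norm_mul, ← hconj, Complex.norm_conj, norm_one] at this
    nlinarith [norm_nonneg (z₁ * z₂ - z₃ ^ 2)]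
  have hA : z₁ = (starRingEnd ℂ) z₂ * (z₁ * z₂ - z₃ ^ 2) := by
    linear_combination z₃ * e2 - z₁ * e4
  have hB : z₂ = (starRingEnd ℂ) z₁ * (z₁ * z₂ - z₃ ^ 2) := by
    linear_combination z₃ * e3 - z₂ * e1
  have hz2 : ‖z₂‖ ≤ 1 := by
    have hn : Complex.normSq z₃ + Complex.normSq z₂ = 1 := by
      rw [Complex.mul_conj, Complex.mul_conj] at e4
      exact_mod_cast e4
    have : Complex.normSq z₂ ≤ 1 := by nlinarith [Complex.normSq_nonneg z₃]
    calc ‖z₂‖ = Real.sqrt (Complex.normSq z₂) := Complex.norm_def z₂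
      _ ≤ Real.sqrt 1 := Real.sqrt_le_sqrt this
      _ = 1 := Real.sqrt_one
  exact ⟨habs, hA, hB, hz2, hA, habs, hz2⟩
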